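/- Let 𝔤 be a finite-dimensional real Lie algebra, U ⊆ ℝ³ open, and let A, B : U → (Fin 3 → 𝔤) be continuously differentiable. Then the Leibniz-type identity div(⋆[A,B]) = ⋆[curl A, ⋆B] − ⋆[A, ⋆(curl B)] holds on U. -/

import Mathlib

open scoped BigOperators

/-- The Levi-Civita symbol on three indices (totally antisymmetric, `ε 0 1 2 = 1`). -/
noncomputable def levicivita (i j k : Fin 3) : ℝ :=
  (((j : ℕ) : ℝ) - ((i : ℕ) : ℝ)) * (((k : ℕ) : ℝ) - ((j : ℕ) : ℝ)) *
    (((k : ℕ) : ℝ) - ((i : ℕ) : ℝ)) / 2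

/-- The partial derivative `∂_μ f` on `ℝ³`. -/
noncomputable def pderiv3 {E : Type*} [NormedAddCommGroup E] [NormedSpace ℝ E]
    (μ : Fin 3) (f : EuclideanSpace ℝ (Fin 3) → E) (x : EuclideanSpace ℝ (Fin 3)) : E :=
  fderiv ℝ f x (EuclideanSpace.single μ 1)

/-- The gradient of a `𝔤`-valued function on `ℝ³`. -/
noncomputable def grad3 {𝔤 : Type*} [NormedAddCommGroup 𝔤] [NormedSpace ℝ 𝔤]
    (q : EuclideanSpace ℝ (Fin 3) → 𝔤) (x : EuclideanSpace ℝ (Fin 3)) : Fin 3 → 𝔤 :=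
  fun μ => pderiv3 μ q x

/-- The curl of a `𝔤`-valued vector field on `ℝ³`:
`(curl A)(α) = Σ_{μ,ν} ε(α,μ,ν) • ∂_μ A(ν)`. -/
noncomputable def curl3 {𝔤 : Type*} [NormedAddCommGroup 𝔤] [NormedSpace ℝ 𝔤]
    (A : EuclideanSpace ℝ (Fin 3) → Fin 3 → 𝔤) (x : EuclideanSpace ℝ (Fin 3)) :
    Fin 3 → 𝔤 :=
  fun α => ∑ μ : Fin 3, ∑ ν : Fin 3, levicivita α μ ν • pderiv3 μ (fun y => A y ν) x

/-- The divergence of a `𝔤`-valued vector field on `ℝ³`: `div A = Σ_μ ∂_μ A(μ)`. -/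
noncomputable def div3 {𝔤 : Type*} [NormedAddCommGroup 𝔤] [NormedSpace ℝ 𝔤]
    (A : EuclideanSpace ℝ (Fin 3) → Fin 3 → 𝔤) (x : EuclideanSpace ℝ (Fin 3)) : 𝔤 :=
  ∑ μ : Fin 3, pderiv3 μ (fun y => A y μ) x

/-- The cross-bracket `⋆[v,w](α) = Σ_{μ,ν} ε(α,μ,ν) • ⁅v(μ), w(ν)⁆`, where the Lie
bracket of `𝔤` is the continuous bilinear map `br`. -/
noncomputable def crossBr {𝔤 : Type*} [NormedAddCommGroup 𝔤] [NormedSpace ℝ 𝔤]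
    (br : 𝔤 →L[ℝ] 𝔤 →L[ℝ] 𝔤) (v w : Fin 3 → 𝔤) : Fin 3 → 𝔤 :=
  fun α => ∑ μ : Fin 3, ∑ ν : Fin 3, levicivita α μ ν • br (v μ) (w ν)

/-- The dot-bracket `⋆[v,⋆w] = Σ_α ⁅v(α), w(α)⁆`, where the Lie bracket of `𝔤` is the
continuous bilinear map `br`. -/
noncomputable def dotBr {𝔤 : Type*} [NormedAddCommGroup 𝔤] [NormedSpace ℝ 𝔤]
    (br : 𝔤 →L[ℝ] 𝔤 →L[ℝ] 𝔤) (v w : Fin 3 → 𝔤) : 𝔤 :=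
  ∑ α : Fin 3, br (v α) (w α)

section Aux
variable {𝔤 : Type*} [NormedAddCommGroup 𝔤] [NormedSpace ℝ 𝔤]

lemma pderiv3_br (br : 𝔤 →L[ℝ] 𝔤 →L[ℝ] 𝔤) (μ : Fin 3)
    (f g : EuclideanSpace ℝ (Fin 3) → 𝔤) (x : EuclideanSpace ℝ (Fin 3))
    (hf : DifferentiableAt ℝ f x) (hg : DifferentiableAt ℝ g x) :
    pderiv3 μ (fun y => br (f y) (g y)) x
      = br (pderiv3 μ f x) (g x) + br (f x) (pderiv3 μ g x) := by
  have hc : HasFDerivAt (fun y => br (f y)) (br.comp (fderiv ℝ f x)) x :=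
    br.hasFDerivAt.comp x hf.hasFDerivAt
  have h := hc.clm_apply hg.hasFDerivAt
  simp only [pderiv3, h.fderiv]
  simp [add_comm]

lemma pderiv3_sum {ι : Type*} (s : Finset ι) (μ : Fin 3)
    (f : ι → EuclideanSpace ℝ (Fin 3) → 𝔤) (x : EuclideanSpace ℝ (Fin 3))
    (hf : ∀ i ∈ s, DifferentiableAt ℝ (f i) x) :
    pderiv3 μ (fun y => ∑ i ∈ s, f i y) x = ∑ i ∈ s, pderiv3 μ (f i) x := by
  simp [pderiv3, fderiv_fun_sum hf]

lemma pderiv3_smul (c : ℝ) (μ : Fin 3) (f : EuclideanSpace ℝ (Fin 3) → 𝔤)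
    (x : EuclideanSpace ℝ (Fin 3)) (hf : DifferentiableAt ℝ f x) :
    pderiv3 μ (fun y => c • f y) x = c • pderiv3 μ f x := by
  simp [pderiv3, fderiv_fun_const_smul hf]

end Aux

/-- the Leibniz-type identity
`div(⋆[A,B]) = ⋆[curl A, ⋆B] − ⋆[A, ⋆(curl B)]` on `U`. -/
theorem div_crossBr {𝔤 : Type*} [NormedAddCommGroup 𝔤] [NormedSpace ℝ 𝔤]
    [FiniteDimensional ℝ 𝔤]
    (br : 𝔤 →L[ℝ] 𝔤 →L[ℝ] 𝔤)
    (br_alt : ∀ a : 𝔤, br a a = 0)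
    (br_jacobi : ∀ a b c : 𝔤, br a (br b c) + br b (br c a) + br c (br a b) = 0)
    (U : Set (EuclideanSpace ℝ (Fin 3))) (hU : IsOpen U)
    (A B : EuclideanSpace ℝ (Fin 3) → Fin 3 → 𝔤)
    (hA : ContDiffOn ℝ 1 A U) (hB : ContDiffOn ℝ 1 B U) :
    ∀ x ∈ U,
      div3 (fun y => crossBr br (A y) (B y)) x
        = dotBr br (curl3 A x) (B x) - dotBr br (A x) (curl3 B x) := by
  intro x hx
  have hAd : ∀ ν : Fin 3, DifferentiableAt ℝ (fun y => A y ν) x := fun ν =>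
    differentiableAt_pi.mp
      ((hA.differentiableOn one_ne_zero).differentiableAt (hU.mem_nhds hx)) ν
  have hBd : ∀ ν : Fin 3, DifferentiableAt ℝ (fun y => B y ν) x := fun ν =>
    differentiableAt_pi.mp
      ((hB.differentiableOn one_ne_zero).differentiableAt (hU.mem_nhds hx)) ν
  have hbr : ∀ ν ρ : Fin 3, DifferentiableAt ℝ (fun y => br (A y ν) (B y ρ)) x := fun ν ρ =>
    ((br.hasFDerivAt.comp x (hAd ν).hasFDerivAt).clm_apply (hBd ρ).hasFDerivAt).differentiableAt
  have key : ∀ μ : Fin 3,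
      pderiv3 μ (fun y => crossBr br (A y) (B y) μ) x
        = ∑ ν : Fin 3, ∑ ρ : Fin 3, levicivita μ ν ρ •
            (br (pderiv3 μ (fun y => A y ν) x) (B x ρ)
              + br (A x ν) (pderiv3 μ (fun y => B y ρ) x)) := by
    intro μ
    have e1 : (fun y => crossBr br (A y) (B y) μ)
        = fun y => ∑ ν : Fin 3, ∑ ρ : Fin 3, levicivita μ ν ρ • br (A y ν) (B y ρ) := rfl
    rw [e1, pderiv3_sum _ _ _ _ (fun ν _ =>
      DifferentiableAt.fun_sum (fun ρ _ => ((hbr ν ρ).fun_const_smul (levicivita μ ν ρ))))]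
    refine Finset.sum_congr rfl fun ν _ => ?_
    rw [pderiv3_sum _ _ _ _ (fun ρ _ => ((hbr ν ρ).fun_const_smul (levicivita μ ν ρ)))]
    refine Finset.sum_congr rfl fun ρ _ => ?_
    rw [pderiv3_smul _ _ _ _ (hbr ν ρ), pderiv3_br br μ _ _ x (hAd ν) (hBd ρ)]
  simp only [div3]
  rw [Finset.sum_congr rfl (fun μ _ => key μ)]
  simp only [dotBr, curl3, smul_add]
  simp only [Fin.sum_univ_three, map_sum, map_smul, ContinuousLinearMap.coe_sum',
    ContinuousLinearMap.coe_smul', Finset.sum_apply, Pi.smul_apply, smul_add, Finset.sum_add_distrib]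
  norm_num [levicivita]
  abel
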